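/- Let ⟨λ_i : i < κ⟩ be a sequence of regular cardinals, I an ideal on κ, and θ a regular cardinal with liminf_I⟨λ_i⟩ ≥ θ. For any ideal J on κ extending I and any A ∈ J⁺, the following are equivalent: (a) there is h ∈ ∏_{i<κ} λ_i such that for every ε < θ the set {i ∈ A : h(i) < ε} ∈ J; (b) the reduced product (∏_{i<κ} λ_i, <_{J+(κ\A)}) is θ⁺-directed. -/

import Mathlib

universe u

/-- For ideals `I ⊆ J` on `κ`, regular `lams i` with `liminf_I ⟨lams i⟩ ≥ θ`
(`θ` regular) and `A ∈ J⁺`, the following are equivalent: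
(a) there is `h ∈ ∏ lams i` with `{i ∈ A : h i < ε} ∈ J` for every `ε < θ`;
(b) `(∏ lams i, <_{J+(κ∖A)})` is `θ⁺`-directed. -/
theorem stmt_19 {κ : Type u} (I J : Set (Set κ)) (hIJ : I ⊆ J)
    (hJdown : ∀ A B : Set κ, A ⊆ B → B ∈ J → A ∈ J)
    (hJunion : ∀ A B : Set κ, A ∈ J → B ∈ J → A ∪ B ∈ J)
    (lams : κ → Cardinal.{u}) (hreglams : ∀ i, (lams i).IsRegular)
    (θ : Cardinal.{u}) (hθreg : θ.IsRegular)
    (hliminf : ∀ μ : Cardinal.{u}, μ < θ → {i | lams i ≤ μ} ∈ I)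
    (A : Set κ) (hA : A ∉ J) :
    (∃ h : κ → Ordinal.{u}, (∀ i : κ, h i < (lams i).ord) ∧
      ∀ ε : Ordinal.{u}, ε < θ.ord → {i | i ∈ A ∧ h i < ε} ∈ J) ↔
    (∀ (ι : Type u) (F : ι → κ → Ordinal.{u}),
      Cardinal.mk ι ≤ θ → (∀ x : ι, ∀ i : κ, F x i < (lams i).ord) →
      ∃ g : κ → Ordinal.{u}, (∀ i : κ, g i < (lams i).ord) ∧
        ∀ x : ι, {i | i ∈ A ∧ g i < F x i} ∈ J) := by
  constructor
  · rintro ⟨h, hh1, hh2⟩ ι F hι hF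
    haveI : IsWellOrder θ.ord.ToType (· < ·) := isWellOrder_lt
    -- enumerate ι by ordinals below θ.ord
    have hmk : Cardinal.mk ι ≤ Cardinal.mk θ.ord.ToType := by
      rwa [Cardinal.mk_toType, Cardinal.card_ord]
    obtain ⟨e0⟩ := (Cardinal.le_def _ _).mp hmk
    set e : ι → Ordinal.{u} := fun x => Ordinal.typein (α := θ.ord.ToType) (· < ·) (e0 x)
      with he_def
    have he_lt : ∀ x, e x < θ.ord := fun x => Ordinal.typein_lt_self _
    have he_inj : Function.Injective e := fun a b hab =>
      e0.injective ((Ordinal.typein_inj _).mp hab)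
    -- the index sets
    set T : κ → Set ι := fun i => {x | e x < h i ∨ θ < lams i} with hT_def
    set g : κ → Ordinal.{u} := fun i => ⨆ x : T i, F x i with hg_def
    have hg_lt : ∀ i, g i < (lams i).ord := by
      intro i
      have hcard : Cardinal.mk (T i) < lams i := by
        rcases lt_or_ge θ (lams i) with hθl | hθl
        · exact lt_of_le_of_lt ((Cardinal.mk_subtype_le _).trans hι) hθl
        · -- lams i ≤ θ, so T i = {x | e x < h i}
          have hTsub : Cardinal.mk (T i) ≤ (h i).card := by
            have : Function.Injective (fun x : T i =>
                (Ordinal.ToType.mk (o := h i)) ⟨e x.1, by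
                  rcases x.2 with hx | hx
                  · exact hx
                  · exact absurd hθl (not_le.mpr hx)⟩) := by
              intro a b hab
              have := (Ordinal.ToType.mk (o := h i)).injective hab
              exact Subtype.ext (he_inj (congrArg Subtype.val this))
            calc Cardinal.mk (T i) ≤ Cardinal.mk (h i).ToType :=
                  Cardinal.mk_le_of_injective this
              _ = (h i).card := Cardinal.mk_toType _
          exact lt_of_le_of_lt hTsub (Cardinal.lt_ord.mp (hh1 i))
      exact Cardinal.iSup_lt_ord_of_isRegular (hreglams i) hcard fun x => hF x.1 i
    refine ⟨g, hg_lt, fun x => ?_⟩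
    have hsucc : e x + 1 < θ.ord := (Cardinal.isSuccLimit_ord hθreg.aleph0_le).succ_lt (he_lt x)
    refine hJdown _ {i | i ∈ A ∧ h i < e x + 1} ?_ (hh2 _ hsucc)
    intro i hi
    obtain ⟨hiA, hig⟩ := hi
    refine ⟨hiA, ?_⟩
    by_contra hcon
    have hx : e x < h i := lt_of_lt_of_le (Order.lt_succ (e x)) (not_lt.mp hcon)
    have hxT : x ∈ T i := Or.inl hx
    have : F x i ≤ g i := le_ciSup (Ordinal.bddAbove_range _) (⟨x, hxT⟩ : T i)
    exact absurd (lt_of_le_of_lt this hig) (lt_irrefl _)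
  · intro hb
    haveI : IsWellOrder θ.ord.ToType (· < ·) := isWellOrder_lt
    set F : θ.ord.ToType → κ → Ordinal.{u} := fun x i =>
      if Ordinal.typein (α := θ.ord.ToType) (· < ·) x < (lams i).ord then
        Ordinal.typein (α := θ.ord.ToType) (· < ·) x else 0 with hF_def
    have hmk : Cardinal.mk θ.ord.ToType ≤ θ := by
      rw [Cardinal.mk_toType, Cardinal.card_ord]
    have hord_pos : ∀ i, (0 : Ordinal) < (lams i).ord := fun i => by
      rw [Cardinal.lt_ord, Ordinal.card_zero]
      exact (hreglams i).pos
    have hFlt : ∀ x i, F x i < (lams i).ord := by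
      intro x i
      simp only [hF_def]
      split
      · assumption
      · exact hord_pos i
    obtain ⟨g, hg1, hg2⟩ := hb θ.ord.ToType F hmk hFlt
    refine ⟨g, hg1, fun ε hε => ?_⟩
    set x : θ.ord.ToType := Ordinal.enum (α := θ.ord.ToType) (· < ·)
      ⟨ε, by rwa [Ordinal.type_toType]⟩ with hx_def
    have hxε : Ordinal.typein (α := θ.ord.ToType) (· < ·) x = ε := Ordinal.typein_enum _ _
    have hsmall : {i | lams i ≤ ε.card} ∈ J := hIJ (hliminf ε.card (Cardinal.lt_ord.mp hε))
    refine hJdown _ ({i | i ∈ A ∧ g i < F x i} ∪ {i | lams i ≤ ε.card}) ?_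
      (hJunion _ _ (hg2 x) hsmall)
    intro i hi
    obtain ⟨hiA, hig⟩ := hi
    rcases lt_or_ge ε (lams i).ord with hεl | hεl
    · left
      refine ⟨hiA, ?_⟩
      have : F x i = ε := by rw [hF_def]; simp only [hxε]; rw [if_pos hεl]
      rwa [this]
    · right
      have : lams i = (lams i).ord.card := (Cardinal.card_ord _).symm
      rw [Set.mem_setOf_eq, this]
      exact Ordinal.card_le_card hεl
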